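/- Let ρ ∈ [−1,1]. Then: (a) 1/√2 + √(2(1−ρ)) < 1 if and only if ρ > 1/√2 + 1/4; and (b) for every ρ ∈ (1/√2, 1), (ρ + √(1−ρ²))/√2 < min(1, 1/√2 + √(2(1−ρ))). -/
import Mathlib


/-- two-level comparison with `σ₀ = σ₁` and `M = 2`:
(a) `1/√2 + √(2(1−ρ)) < 1 ↔ ρ > 1/√2 + 1/4`; (b) for `ρ ∈ (1/√2, 1)`,
the weighted normalised cost `(ρ + √(1−ρ²))/√2` is strictly below both `1`
and `1/√2 + √(2(1−ρ))`. -/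
theorem two_level_comparison :
    (∀ ρ : ℝ, ρ ∈ Set.Icc (-1 : ℝ) 1 →
      (1 / Real.sqrt 2 + Real.sqrt (2 * (1 - ρ)) < 1 ↔
        ρ > 1 / Real.sqrt 2 + 1 / 4)) ∧
    (∀ ρ : ℝ, ρ ∈ Set.Ioo (1 / Real.sqrt 2) 1 →
      (ρ + Real.sqrt (1 - ρ ^ 2)) / Real.sqrt 2 <
        min 1 (1 / Real.sqrt 2 + Real.sqrt (2 * (1 - ρ)))) := by
  have hs : (0:ℝ) < Real.sqrt 2 := by positivity
  have hs2 : Real.sqrt 2 ^ 2 = 2 := Real.sq_sqrt (by norm_num)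
  have hslt2 : Real.sqrt 2 < 2 := by nlinarith
  have hinv : 1 / Real.sqrt 2 = Real.sqrt 2 / 2 := by
    rw [div_eq_div_iff hs.ne' (by norm_num)]; nlinarith
  set s := Real.sqrt 2 with hsdef
  constructor
  · intro ρ hρ
    obtain ⟨h1, h2⟩ := hρ
    set a := Real.sqrt (2 * (1 - ρ)) with ha
    have ha0 : 0 ≤ a := Real.sqrt_nonneg _
    have ha2 : a ^ 2 = 2 * (1 - ρ) := Real.sq_sqrt (by linarith)
    have hc : 0 < 1 - s / 2 := by nlinarith
    rw [hinv]
    constructor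
    · intro h
      have key : (1 - s / 2 - a) * (1 - s / 2 + a) > 0 :=
        mul_pos (by linarith) (by linarith)
      nlinarith
    · intro h
      have key : a ^ 2 < (1 - s / 2) ^ 2 := by nlinarith
      nlinarith
  · intro ρ hρ
    obtain ⟨h1, h2⟩ := hρ
    rw [hinv] at h1
    have hρ0 : 0 < ρ := by nlinarith
    have hρ2 : 1 / 2 < ρ ^ 2 := by nlinarith
    set t := Real.sqrt (1 - ρ ^ 2) with ht
    have ht0 : 0 ≤ t := Real.sqrt_nonneg _
    have ht2 : t ^ 2 = 1 - ρ ^ 2 := Real.sq_sqrt (by nlinarith)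
    set u := Real.sqrt (1 - ρ) with hu
    have hu0 : 0 < u := Real.sqrt_pos.mpr (by linarith)
    have hu2 : u ^ 2 = 1 - ρ := Real.sq_sqrt (by linarith)
    set v := Real.sqrt (1 + ρ) with hv
    have hv0 : 0 ≤ v := Real.sqrt_nonneg _
    have hv2 : v ^ 2 = 1 + ρ := Real.sq_sqrt (by linarith)
    have hvlt : v < 2 := by nlinarith
    have htuv : t = u * v := by
      rw [ht, hu, hv, ← Real.sqrt_mul (by linarith)]
      congr 1; ring
    have hsa : Real.sqrt (2 * (1 - ρ)) = s * u := by
      rw [hu, hsdef, ← Real.sqrt_mul (by norm_num)]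
    rw [lt_min_iff]
    constructor
    · rw [div_lt_one hs]
      -- (ρ + t)^2 = 1 + 2ρt < 2 since (ρ - t)^2 > 0 (ρ ≠ t)
      have hne : ρ ≠ t := by
        intro h; rw [← h] at ht2; nlinarith
      have hsq : (ρ + t) ^ 2 < 2 := by nlinarith [sq_pos_of_ne_zero (sub_ne_zero.mpr hne)]
      nlinarith
    · rw [hsa, hinv, div_lt_iff₀ hs]
      have heq : (s / 2 + s * u) * s = 1 + 2 * u := by
        linear_combination (1 / 2 + u) * hs2
      have hlt : t < 1 - ρ + 2 * u := by
        rw [htuv]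
        linarith [mul_lt_mul_of_pos_left hvlt hu0, sq_nonneg u, hu2]
      linarith
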